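/- Let m2 and n be positive integers, let q be a prime not dividing m2, and let x be an integer with 0 < x < n. For each prime r dividing m2 write α_r for the r-adic valuation of m2. Then x = m2·q if and only if the following three conditions all hold: (i) for every prime r dividing m2, r^(α_r) divides x and r^(α_r+1) does not divide x; (ii) q divides x and q² does not divide x; (iii) for every prime s with m2·s < n, s ≠ q and s not dividing m2, s does not divide x. -/
import Mathlib


theorem stmt_4 (m2 n : ℕ) (hm2 : 0 < m2) (hn : 0 < n) (q : ℕ) (hq : q.Prime)
    (hqm2 : ¬ q ∣ m2) (x : ℤ) (hx0 : 0 < x) (hxn : x < (n : ℤ)) :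
    x = (m2 : ℤ) * q ↔
      ((∀ r : ℕ, r.Prime → r ∣ m2 →
          ((r : ℤ) ^ (m2.factorization r) ∣ x ∧ ¬ (r : ℤ) ^ (m2.factorization r + 1) ∣ x)) ∧
        ((q : ℤ) ∣ x ∧ ¬ (q : ℤ) ^ 2 ∣ x) ∧
        (∀ s : ℕ, s.Prime → m2 * s < n → s ≠ q → ¬ s ∣ m2 → ¬ (s : ℤ) ∣ x)) := by
  obtain ⟨y, rfl⟩ : ∃ y : ℕ, x = (y : ℤ) := ⟨x.toNat, (Int.toNat_of_nonneg hx0.le).symm⟩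
  have hy0 : 0 < y := by exact_mod_cast hx0
  have hyn : y < n := by exact_mod_cast hxn
  simp only [show ((m2 : ℤ) * q = ((m2 * q : ℕ) : ℤ)) by push_cast; ring, Nat.cast_inj,
    ← Nat.cast_pow, Int.natCast_dvd_natCast]
  constructor
  · rintro rfl
    have hmq0 : m2 * q ≠ 0 := by positivity
    refine ⟨?_, ⟨dvd_mul_left q m2, ?_⟩, ?_⟩
    · intro r hr hrm2
      have hrq : r ≠ q := fun h => hqm2 (h ▸ hrm2)
      have hqr : q.factorization r = 0 := Nat.factorization_eq_zero_of_not_dvd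
        (fun h => hrq ((Nat.prime_dvd_prime_iff_eq hr hq).mp h))
      have hfac : (m2 * q).factorization r = m2.factorization r := by
        rw [Nat.factorization_mul hm2.ne' hq.ne_zero, Finsupp.add_apply, hqr, Nat.add_zero]
      constructor
      · exact (Nat.ordProj_dvd m2 r).trans (Dvd.intro q rfl)
      · rw [hr.pow_dvd_iff_le_factorization hmq0, hfac]
        omega
    · rw [hq.pow_dvd_iff_le_factorization hmq0, Nat.factorization_mul hm2.ne' hq.ne_zero,
        Finsupp.add_apply, Nat.factorization_eq_zero_of_not_dvd hqm2,
        Nat.Prime.factorization_self hq]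
      omega
    · intro s hs _ hsq hsm2 hdvd
      rcases (Nat.Prime.dvd_mul hs).mp hdvd with h | h
      · exact hsm2 h
      · exact hsq ((Nat.prime_dvd_prime_iff_eq hs hq).mp h)
  · rintro ⟨h1, ⟨hqy, hq2y⟩, h3⟩
    have hm2y : m2 ∣ y := by
      rw [← Nat.factorization_le_iff_dvd hm2.ne' hy0.ne']
      intro p
      by_cases hp : p.Prime
      · by_cases hpm : p ∣ m2
        · exact (hp.pow_dvd_iff_le_factorization hy0.ne').mp (h1 p hp hpm).1
        · simp [Nat.factorization_eq_zero_of_not_dvd hpm]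
      · simp [Nat.factorization_eq_zero_of_not_prime _ hp]
    have hco : (m2 * q) ∣ y :=
      (Nat.Coprime.mul_dvd_of_dvd_of_dvd
        ((hq.coprime_iff_not_dvd.mpr hqm2).symm) hm2y hqy)
    obtain ⟨k, hk⟩ := hco
    have hk0 : 0 < k := by
      rcases Nat.eq_zero_or_pos k with h | h
      · simp [h, hk] at hy0
      · exact h
    rcases Nat.lt_or_ge k 2 with hk1 | hk2
    · interval_cases k
      · simp [hk]
    · exfalso
      obtain ⟨s, hs, hsk⟩ := Nat.exists_prime_and_dvd (by omega : k ≠ 1)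
      have hsy : s ∣ y := hsk.trans ⟨m2 * q, by rw [hk]; ring⟩
      by_cases hsq : s = q
      · apply hq2y
        subst hsq
        obtain ⟨t, ht⟩ := hsk
        exact ⟨m2 * t, by rw [hk, ht]; ring⟩
      · by_cases hsm : s ∣ m2
        · apply (h1 s hs hsm).2
          obtain ⟨t, ht⟩ := hsk
          calc s ^ (m2.factorization s + 1) = s ^ (m2.factorization s) * s := by ring
          _ ∣ m2 * s := Nat.mul_dvd_mul (Nat.ordProj_dvd m2 s) dvd_rfl
          _ ∣ y := by rw [hk, ht]; exact ⟨q * t, by ring⟩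
        · apply h3 s hs ?_ hsq hsm hsy
          have hsk' : s ≤ k := Nat.le_of_dvd hk0 hsk
          have : m2 * k < m2 * (q * k) := by
            have := hq.two_le
            nlinarith
          calc m2 * s ≤ m2 * k := Nat.mul_le_mul_left m2 hsk'
            _ < m2 * (q * k) := this
            _ = y := by rw [hk]; ring
            _ < n := hyn
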